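/- Let μ ∈ [0, 3/13), x = log₂((1-μ)/4), w > 0, D_0 > 0, c > 0, and define h(Q) = (w D_0 ln 2 / (c(1-μ))) Q^x · (−(4/3)μ Q² log₂(1-μ) − 4μQ log₂((1-μ)/2) − (1 − (16/3)μ) log₂((1-μ)/4)). Then h'(Q) = (w D_0 ln 2/(c(1-μ))) Q^{x-1} g(Q) where g(Q) = −(4/3)μ(x+2)²Q² − 4μ(x+1)²Q − x²(1 − (16/3)μ), and g(Q) < 0 for all Q ≥ 1; hence h is strictly decreasing on [1, ∞). -/

import Mathlib

set_option maxHeartbeats 800000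

lemma gneg_aux (μ x Q : ℝ) (hμ0 : 0 ≤ μ) (hμ1 : μ < 3 / 13) (hx2 : x ≤ -2) (hQ : 1 ≤ Q) :
    -(4 / 3) * μ * (x + 2) ^ 2 * Q ^ 2 - 4 * μ * (x + 1) ^ 2 * Q
      - x ^ 2 * (1 - (16 / 3) * μ) < 0 := by
  nlinarith [mul_nonneg (mul_nonneg hμ0 (sq_nonneg (x + 2))) (show (0:ℝ) ≤ Q ^ 2 - 1 by nlinarith),
    mul_nonneg (mul_nonneg hμ0 (sq_nonneg (x + 1))) (show (0:ℝ) ≤ Q - 1 by linarith),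
    mul_nonneg (show (0:ℝ) ≤ -13 * x - 14 by linarith) (show (0:ℝ) ≤ -x - 2 by linarith),
    mul_pos (show (0:ℝ) < 3 - 13 * μ by linarith) (show (0:ℝ) < -40 * x - 28 by linarith)]

theorem stmt12 (μ w D0 c : ℝ) (hμ0 : 0 ≤ μ) (hμ1 : μ < 3 / 13)
    (hw : 0 < w) (hD0 : 0 < D0) (hc : 0 < c)
    (x : ℝ) (hx : x = Real.logb 2 ((1 - μ) / 4))
    (h g : ℝ → ℝ)
    (hh : ∀ Q : ℝ, h Q = (w * D0 * Real.log 2 / (c * (1 - μ))) * Q ^ x *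
      (-(4 / 3) * μ * Q ^ 2 * Real.logb 2 (1 - μ)
        - 4 * μ * Q * Real.logb 2 ((1 - μ) / 2)
        - (1 - (16 / 3) * μ) * Real.logb 2 ((1 - μ) / 4)))
    (hgdef : ∀ Q : ℝ, g Q =
      -(4 / 3) * μ * (x + 2) ^ 2 * Q ^ 2 - 4 * μ * (x + 1) ^ 2 * Q
        - x ^ 2 * (1 - (16 / 3) * μ)) :
    (∀ Q : ℝ, 1 ≤ Q →
      deriv h Q = (w * D0 * Real.log 2 / (c * (1 - μ))) * Q ^ (x - 1) * g Q) ∧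
    (∀ Q : ℝ, 1 ≤ Q → g Q < 0) ∧
    StrictAntiOn h (Set.Ici (1 : ℝ)) := by
  have hμ' : 0 < 1 - μ := by linarith
  set K := w * D0 * Real.log 2 / (c * (1 - μ)) with hK
  have hKpos : 0 < K := by
    apply div_pos
    · exact mul_pos (mul_pos hw hD0) (Real.log_pos (by norm_num))
    · exact mul_pos hc hμ'
  have l4 : Real.logb 2 (4 : ℝ) = 2 := by
    rw [show (4:ℝ) = 2 ^ (2:ℕ) by norm_num, Real.logb_pow,
      Real.logb_self_eq_one (by norm_num)]
    norm_num
  have l2' : Real.logb 2 (2 : ℝ) = 1 := Real.logb_self_eq_one (by norm_num)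
  have l0 : Real.logb 2 ((1 - μ) / 4) = x := hx.symm
  have l1 : Real.logb 2 ((1 - μ) / 2) = x + 1 := by
    rw [hx, Real.logb_div hμ'.ne' (by norm_num), Real.logb_div hμ'.ne' (by norm_num), l4, l2']
    ring
  have l2 : Real.logb 2 (1 - μ) = x + 2 := by
    rw [hx, Real.logb_div hμ'.ne' (by norm_num), l4]; ring
  have hx2 : x ≤ -2 := by
    have h0 : Real.logb 2 (1 - μ) ≤ 0 :=
      Real.logb_nonpos (by norm_num) hμ'.le (by linarith)
    rw [l2] at h0; linarith
  set A := -(4 / 3) * μ * (x + 2) with hA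
  set B := -4 * μ * (x + 1) with hB
  set C := -((1 - (16 / 3) * μ) * x) with hC
  have hfun : h = fun Q : ℝ => K * (Q ^ x * (A * Q ^ 2 + B * Q + C)) := by
    funext Q
    rw [hh, l1, l2, l0, hA, hB, hC]; ring
  have hderiv : ∀ Q : ℝ, 1 ≤ Q → HasDerivAt h (K * Q ^ (x - 1) * g Q) Q := by
    intro Q hQ
    have hQ0 : (0:ℝ) < Q := lt_of_lt_of_le one_pos hQ
    have h1 : HasDerivAt (fun Q : ℝ => Q ^ x) (x * Q ^ (x - 1)) Q :=
      Real.hasDerivAt_rpow_const (Or.inl hQ0.ne')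
    have hp : HasDerivAt (fun Q : ℝ => A * Q ^ 2 + B * Q + C) (A * (2 * Q) + B) Q := by
      have h2 := (hasDerivAt_pow 2 Q).const_mul A
      have h3 := (hasDerivAt_id Q).const_mul B
      simpa [mul_comm, mul_assoc] using (h2.add h3).add_const C
    have hd := (h1.mul hp).const_mul K
    rw [hfun]
    refine hd.congr_deriv ?_
    have hqx : Q ^ x = Q ^ (x - 1) * Q := by
      rw [← Real.rpow_add_one hQ0.ne' (x - 1)]; norm_num
    rw [hqx, hgdef, hA, hB, hC]; ring
  have hgneg : ∀ Q : ℝ, 1 ≤ Q → g Q < 0 := by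
    intro Q hQ
    rw [hgdef]
    exact gneg_aux μ x Q hμ0 hμ1 hx2 hQ
  refine ⟨fun Q hQ => (hderiv Q hQ).deriv, hgneg, ?_⟩
  apply strictAntiOn_of_deriv_neg (convex_Ici 1)
  · exact fun Q hQ => (hderiv Q hQ).continuousAt.continuousWithinAt
  · intro Q hQ
    rw [interior_Ici] at hQ
    have hQ1 : (1:ℝ) ≤ Q := le_of_lt hQ
    rw [(hderiv Q hQ1).deriv]
    have hpow : (0:ℝ) < Q ^ (x - 1) := Real.rpow_pos_of_pos (lt_trans one_pos hQ) _
    exact mul_neg_of_pos_of_neg (mul_pos hKpos hpow) (hgneg Q hQ1)
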